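/- (Squeezing lemma, scalar case) Suppose C ≥ 0 is such that for every C¹ function v̂ : ℝ² → ℝ with ∫_{K̂} v̂ dx = 0 one has ∫_{K̂} v̂² dx ≤ C² ∫_{K̂} |∇v̂|² dx. Then for all α, β > 0 and every C¹ function v : ℝ² → ℝ with ∫_{K_{αβ}} v dx = 0, where K_{αβ} is the triangle with vertices (0,0), (α,0), (0,β), one has ∫_{K_{αβ}} v² dx ≤ (max{α, β})² C² ∫_{K_{αβ}} |∇v|² dx. -/

import Mathlib

open MeasureTheory

noncomputable section

abbrev E2 : Type := EuclideanSpace ℝ (Fin 2)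

/-- The point (a, b) in the Euclidean plane. -/
def pt (a b : ℝ) : E2 := WithLp.toLp 2 ![a, b]

/-- First standard basis vector. -/
def vex : E2 := pt 1 0
/-- Second standard basis vector. -/
def vey : E2 := pt 0 1

/-- Euclidean dot product on the plane. -/
def dot2 (v w : E2) : ℝ := v 0 * w 0 + v 1 * w 1

/-- rot (w₁, w₂) = (w₂, −w₁). -/
def rot (w : E2) : E2 := pt (w 1) (-(w 0))

/-- Flux of a vector field across the (oriented) segment from `a` to `b`:
∫₀¹ q(a + t(b − a)) · rot(b − a) dt, the line integral of the normal component. -/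
def flux (q : E2 → E2) (a b : E2) : ℝ :=
  ∫ t in (0:ℝ)..1, dot2 (q (a + t • (b - a))) (rot (b - a))

/-- Squared Euclidean norm of the gradient of a scalar function. -/
def gradSq (v : E2 → ℝ) (x : E2) : ℝ :=
  (fderiv ℝ v x vex) ^ 2 + (fderiv ℝ v x vey) ^ 2

/-- Gradient vector of a scalar function. -/
def gradVec (v : E2 → ℝ) (x : E2) : E2 :=
  pt (fderiv ℝ v x vex) (fderiv ℝ v x vey)

/-- Squared Frobenius norm of the Jacobian of a vector field
(sum of squares of the four first-order partial derivatives). -/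
def frobSq (q : E2 → E2) (x : E2) : ℝ :=
  (fderiv ℝ q x vex 0) ^ 2 + (fderiv ℝ q x vey 0) ^ 2 +
  (fderiv ℝ q x vex 1) ^ 2 + (fderiv ℝ q x vey 1) ^ 2

/-- Divergence of a planar vector field. -/
def divg (q : E2 → E2) (x : E2) : ℝ := fderiv ℝ q x vex 0 + fderiv ℝ q x vey 1

/-- The reference triangle with vertices (0,0), (1,0), (0,1). -/
def Khat : Set E2 := convexHull ℝ {pt 0 0, pt 1 0, pt 0 1}

/-- The triangle with vertices (0,0), (α,0), (0,β). -/
def Kab (a b : ℝ) : Set E2 := convexHull ℝ {pt 0 0, pt a 0, pt 0 b}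

/-- Matrix–vector multiplication for 2×2 matrices acting on the plane. -/
def matVec (A : Matrix (Fin 2) (Fin 2) ℝ) (x : E2) : E2 :=
  pt (A 0 0 * x 0 + A 0 1 * x 1) (A 1 0 * x 0 + A 1 1 * x 1)

/-- Squared Frobenius norm of a 2×2 matrix. -/
def mFrobSq (M : Matrix (Fin 2) (Fin 2) ℝ) : ℝ :=
  M 0 0 ^ 2 + M 0 1 ^ 2 + M 1 0 ^ 2 + M 1 1 ^ 2


def Tmap (a b : ℝ) : E2 →L[ℝ] E2 :=
  LinearMap.toContinuousLinearMap (Matrix.toEuclideanLin (Matrix.diagonal ![a, b]))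

lemma Tmap_apply0 (a b : ℝ) (x : E2) : Tmap a b x 0 = a * x 0 := by
  simp [Tmap, Matrix.toEuclideanLin_apply, Matrix.mulVec, Matrix.diagonal, dotProduct]

lemma Tmap_apply1 (a b : ℝ) (x : E2) : Tmap a b x 1 = b * x 1 := by
  simp [Tmap, Matrix.toEuclideanLin_apply, Matrix.mulVec, Matrix.diagonal, dotProduct,
    Fin.sum_univ_two]

lemma Tmap_det (a b : ℝ) : (Tmap a b).det = a * b := by
  simp [Tmap, ContinuousLinearMap.det, Matrix.toEuclideanLin_eq_toLin, LinearMap.det_toLin,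
    Matrix.det_diagonal, Fin.prod_univ_two]

lemma Tmap_inj (a b : ℝ) (ha : a ≠ 0) (hb : b ≠ 0) : Function.Injective (Tmap a b) := by
  intro x y h
  ext i
  fin_cases i
  · have : Tmap a b x 0 = Tmap a b y 0 := by rw [h]
    rw [Tmap_apply0, Tmap_apply0] at this
    exact mul_left_cancel₀ ha this
  · have : Tmap a b x 1 = Tmap a b y 1 := by rw [h]
    rw [Tmap_apply1, Tmap_apply1] at this
    exact mul_left_cancel₀ hb this

lemma Khat_meas : MeasurableSet Khat :=
  ((Set.Finite.isCompact_convexHull ℝ (Set.toFinite _)).measurableSet)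

lemma pt00 : pt 0 0 = (0 : E2) := by
  ext i; fin_cases i <;> simp [pt]

lemma Tmap_image (a b : ℝ) : Tmap a b '' Khat = Kab a b := by
  have h := (Tmap a b).toLinearMap.image_convexHull ({pt 0 0, pt 1 0, pt 0 1} : Set E2)
  have hc : ⇑(Tmap a b).toLinearMap = ⇑(Tmap a b) := rfl
  rw [hc] at h
  rw [Khat, h, Kab]
  congr 1
  rw [Set.image_insert_eq, Set.image_insert_eq, Set.image_singleton]
  have h1 : Tmap a b (pt 0 0) = pt 0 0 := by rw [pt00]; simp
  have h2 : Tmap a b (pt 1 0) = pt a 0 := by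
    ext i; fin_cases i
    · show Tmap a b (pt 1 0) 0 = pt a 0 0
      rw [Tmap_apply0]; simp [pt]
    · show Tmap a b (pt 1 0) 1 = pt a 0 1
      rw [Tmap_apply1]; simp [pt]
  have h3 : Tmap a b (pt 0 1) = pt 0 b := by
    ext i; fin_cases i
    · show Tmap a b (pt 0 1) 0 = pt 0 b 0
      rw [Tmap_apply0]; simp [pt]
    · show Tmap a b (pt 0 1) 1 = pt 0 b 1
      rw [Tmap_apply1]; simp [pt]
  rw [h1, h2, h3]

lemma cov (a b : ℝ) (ha : 0 < a) (hb : 0 < b) (g : E2 → ℝ) :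
    ∫ x in Kab a b, g x = (a * b) * ∫ x in Khat, g (Tmap a b x) := by
  rw [← Tmap_image a b]
  rw [integral_image_eq_integral_abs_det_fderiv_smul volume Khat_meas
    (fun x _ => ((Tmap a b).hasFDerivAt).hasFDerivWithinAt)
    ((Tmap_inj a b ha.ne' hb.ne').injOn) g]
  simp_rw [Tmap_det, abs_of_pos (mul_pos ha hb), smul_eq_mul]
  rw [integral_const_mul]

lemma Tmap_vex (a b : ℝ) : Tmap a b vex = a • vex := by
  ext i; fin_cases i
  · show Tmap a b vex 0 = (a • vex) 0
    rw [Tmap_apply0]; simp [vex, pt]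
  · show Tmap a b vex 1 = (a • vex) 1
    rw [Tmap_apply1]; simp [vex, pt]

lemma Tmap_vey (a b : ℝ) : Tmap a b vey = b • vey := by
  ext i; fin_cases i
  · show Tmap a b vey 0 = (b • vey) 0
    rw [Tmap_apply0]; simp [vey, pt]
  · show Tmap a b vey 1 = (b • vey) 1
    rw [Tmap_apply1]; simp [vey, pt]

lemma fderiv_comp_Tmap (a b : ℝ) (v : E2 → ℝ) (hv : ContDiff ℝ 1 v) (x : E2) :
    fderiv ℝ (fun y => v (Tmap a b y)) x = (fderiv ℝ v (Tmap a b x)).comp (Tmap a b : E2 →L[ℝ] E2) :=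
  ((hv.differentiable one_ne_zero (Tmap a b x)).hasFDerivAt.comp x (Tmap a b).hasFDerivAt).fderiv

lemma gradSq_comp_le (a b : ℝ) (ha : 0 < a) (hb : 0 < b) (v : E2 → ℝ)
    (hv : ContDiff ℝ 1 v) (x : E2) :
    gradSq (fun y => v (Tmap a b y)) x ≤ (max a b) ^ 2 * gradSq v (Tmap a b x) := by
  have hx : fderiv ℝ (fun y => v (Tmap a b y)) x vex = a * fderiv ℝ v (Tmap a b x) vex := by
    rw [fderiv_comp_Tmap a b v hv x]
    simp [ContinuousLinearMap.comp_apply, Tmap_vex, _root_.map_smul, smul_eq_mul]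
  have hy : fderiv ℝ (fun y => v (Tmap a b y)) x vey = b * fderiv ℝ v (Tmap a b x) vey := by
    rw [fderiv_comp_Tmap a b v hv x]
    simp [ContinuousLinearMap.comp_apply, Tmap_vey, _root_.map_smul, smul_eq_mul]
  rw [gradSq, gradSq, hx, hy]
  have ham : a ≤ max a b := le_max_left a b
  have hbm : b ≤ max a b := le_max_right a b
  have h1 : a ^ 2 ≤ (max a b) ^ 2 := by nlinarith
  have h2 : b ^ 2 ≤ (max a b) ^ 2 := by nlinarith
  have e1 := sq_nonneg (fderiv ℝ v (Tmap a b x) vex)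
  have e2 := sq_nonneg (fderiv ℝ v (Tmap a b x) vey)
  calc (a * fderiv ℝ v (Tmap a b x) vex) ^ 2 + (b * fderiv ℝ v (Tmap a b x) vey) ^ 2
      = a ^ 2 * (fderiv ℝ v (Tmap a b x) vex) ^ 2 + b ^ 2 * (fderiv ℝ v (Tmap a b x) vey) ^ 2 := by
        ring
    _ ≤ (max a b) ^ 2 * (fderiv ℝ v (Tmap a b x) vex) ^ 2
        + (max a b) ^ 2 * (fderiv ℝ v (Tmap a b x) vey) ^ 2 := by
        gcongr
    _ = (max a b) ^ 2 * ((fderiv ℝ v (Tmap a b x) vex) ^ 2 + (fderiv ℝ v (Tmap a b x) vey) ^ 2) := by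
        ring

lemma continuous_gradSq (v : E2 → ℝ) (hv : ContDiff ℝ 1 v) : Continuous (gradSq v) := by
  have h := hv.continuous_fderiv one_ne_zero
  have h1 : Continuous fun x => fderiv ℝ v x vex := h.clm_apply continuous_const
  have h2 : Continuous fun x => fderiv ℝ v x vey := h.clm_apply continuous_const
  exact (h1.pow 2).add (h2.pow 2)

lemma Khat_compact : IsCompact Khat :=
  Set.Finite.isCompact_convexHull ℝ (Set.toFinite _)


/-- Squeezing lemma, scalar case: a Poincaré–Wirtinger constant `C` on the
reference triangle yields the constant `max{α,β} C` on the squeezed triangle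
`K_{αβ}` with vertices (0,0), (α,0), (0,β). -/
theorem stmt9 (C : ℝ) (hC : 0 ≤ C)
    (href : ∀ v : E2 → ℝ, ContDiff ℝ 1 v → (∫ x in Khat, v x) = 0 →
      (∫ x in Khat, (v x) ^ 2) ≤ C ^ 2 * ∫ x in Khat, gradSq v x) :
    ∀ α β : ℝ, 0 < α → 0 < β →
      ∀ v : E2 → ℝ, ContDiff ℝ 1 v → (∫ x in Kab α β, v x) = 0 →
        (∫ x in Kab α β, (v x) ^ 2) ≤
          (max α β) ^ 2 * C ^ 2 * ∫ x in Kab α β, gradSq v x := by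
  intro α β hα hβ v hv hz
  set m := max α β with hm
  have hab : (0:ℝ) < α * β := mul_pos hα hβ
  set u : E2 → ℝ := fun y => v (Tmap α β y) with hu_def
  have hu : ContDiff ℝ 1 u := hv.comp (Tmap α β).contDiff
  -- zero mean of u
  have hz' : (∫ x in Khat, u x) = 0 := by
    have h := cov α β hα hβ v
    rw [hz] at h
    rcases mul_eq_zero.mp h.symm with h' | h'
    · exact absurd h' hab.ne'
    · exact h'
  have h1 := href u hu hz'
  -- gradient comparison
  have hgu : IntegrableOn (gradSq u) Khat volume :=
    ((continuous_gradSq u hu).continuousOn).integrableOn_compact Khat_compact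
  have hgv : IntegrableOn (fun x => m ^ 2 * gradSq v (Tmap α β x)) Khat volume := by
    apply ContinuousOn.integrableOn_compact Khat_compact
    exact (continuous_const.mul ((continuous_gradSq v hv).comp
      (Tmap α β).continuous)).continuousOn
  have h2 : (∫ x in Khat, gradSq u x) ≤ ∫ x in Khat, m ^ 2 * gradSq v (Tmap α β x) := by
    apply setIntegral_mono_on hgu hgv Khat_meas
    intro x _
    exact gradSq_comp_le α β hα hβ v hv x
  rw [integral_const_mul] at h2
  -- change of variables on both sides of the goal
  rw [cov α β hα hβ (fun x => (v x) ^ 2), cov α β hα hβ (gradSq v)]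
  have h3 : (∫ x in Khat, (u x) ^ 2) ≤ C ^ 2 * (m ^ 2 * ∫ x in Khat, gradSq v (Tmap α β x)) :=
    h1.trans (by nlinarith [sq_nonneg C])
  have h4 : (∫ x in Khat, (v (Tmap α β x)) ^ 2) = ∫ x in Khat, (u x) ^ 2 := rfl
  rw [h4]
  nlinarith [h3, hab]


end
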